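/- Let A, B be positive invertible bounded operators on a complex Hilbert space. For all x, y, z ∈ H with z = x + y, one has ⟨(A⁻¹+B⁻¹)⁻¹ z, z⟩ ≤ ⟨Ax, x⟩ + ⟨By, y⟩. -/

import Mathlib

section Aux

variable {H : Type*} [NormedAddCommGroup H] [InnerProductSpace ℂ H] [CompleteSpace H]

/-- The inverse of a positive invertible operator is selfadjoint. -/
lemma aux_inv_sa (A : H →L[ℂ] H) (hA : IsSelfAdjoint A) :
    IsSelfAdjoint (Ring.inverse A) := by
  rw [IsSelfAdjoint, ← Ring.inverse_star, hA.star_eq]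

/-- The inverse of a positive invertible operator is positive. -/
lemma aux_inv_pos (A : H →L[ℂ] H) (hA : IsSelfAdjoint A)
    (hApos : 0 ≤ A) (hAinv : IsUnit A) : 0 ≤ Ring.inverse A := by
  rw [ContinuousLinearMap.nonneg_iff_isPositive] at hApos ⊢
  refine ⟨(aux_inv_sa A hA).isSymmetric, fun u => ?_⟩
  have hAu : A (Ring.inverse A u) = u := by
    have := congrArg (fun T : H →L[ℂ] H => T u) (Ring.mul_inverse_cancel A hAinv)
    simpa [ContinuousLinearMap.mul_apply] using this
  have h0 := hApos.re_inner_nonneg_right (Ring.inverse A u)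
  rw [hAu] at h0
  simpa [ContinuousLinearMap.reApplyInnerSelf, inner_re_symm] using h0

omit [CompleteSpace H] in
lemma aux_re_symm (a b : H) : (inner ℂ a b : ℂ).re = (inner ℂ b a : ℂ).re := by
  rw [← inner_conj_symm b a, Complex.conj_re]

/-- Key quadratic inequality: `2 Re⟪u, x⟫ ≤ Re⟪A x, x⟫ + Re⟪A⁻¹ u, u⟫`. -/
lemma aux_key (A : H →L[ℂ] H) (hA : IsSelfAdjoint A)
    (hApos : 0 ≤ A) (hAinv : IsUnit A) (x u : H) :
    2 * (inner ℂ u x : ℂ).re ≤ (inner ℂ (A x) x : ℂ).re +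
      (inner ℂ (Ring.inverse A u) u : ℂ).re := by
  rw [ContinuousLinearMap.nonneg_iff_isPositive] at hApos
  have hAu : A (Ring.inverse A u) = u := by
    have := congrArg (fun T : H →L[ℂ] H => T u) (Ring.mul_inverse_cancel A hAinv)
    simpa [ContinuousLinearMap.mul_apply] using this
  have hAu' : Ring.inverse A (A x) = x := by
    have := congrArg (fun T : H →L[ℂ] H => T x) (Ring.inverse_mul_cancel A hAinv)
    simpa [ContinuousLinearMap.mul_apply] using this
  have hAv : A (x - Ring.inverse A u) = A x - u := by rw [map_sub, hAu]
  have h0 : (0:ℝ) ≤ (inner ℂ (A x - u) (x - Ring.inverse A u) : ℂ).re := by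
    have := hApos.re_inner_nonneg_left (x - Ring.inverse A u)
    rw [hAv] at this; exact this
  have hexp : (inner ℂ (A x - u) (x - Ring.inverse A u) : ℂ) =
      inner ℂ (A x) x - inner ℂ (A x) (Ring.inverse A u) - inner ℂ u x
        + inner ℂ u (Ring.inverse A u) := by
    rw [inner_sub_left, inner_sub_right, inner_sub_right]; ring
  have h1 : (inner ℂ (A x) (Ring.inverse A u) : ℂ) = inner ℂ x u := by
    have h2 := (aux_inv_sa A hA).isSymmetric (A x) u
    simp only [ContinuousLinearMap.coe_coe] at h2
    rw [← h2, hAu']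
  rw [hexp, h1] at h0
  simp only [Complex.add_re, Complex.sub_re] at h0
  rw [aux_re_symm x u, aux_re_symm u (Ring.inverse A u)] at h0
  linarith

end Aux

theorem parallel_sum_le
    {H : Type*} [NormedAddCommGroup H] [InnerProductSpace ℂ H] [CompleteSpace H]
    (A B : H →L[ℂ] H) (hA : IsSelfAdjoint A) (hB : IsSelfAdjoint B)
    (hApos : 0 ≤ A) (hBpos : 0 ≤ B) (hAinv : IsUnit A) (hBinv : IsUnit B) :
    ∀ x y z : H, z = x + y →
      (inner ℂ (Ring.inverse (Ring.inverse A + Ring.inverse B) z) z : ℂ).re ≤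
        (inner ℂ (A x) x : ℂ).re + (inner ℂ (B y) y : ℂ).re := by
  intro x y z hz
  set C : H →L[ℂ] H := Ring.inverse A + Ring.inverse B with hC
  have hA'pos : 0 ≤ Ring.inverse A := aux_inv_pos A hA hApos hAinv
  have hB'pos : 0 ≤ Ring.inverse B := aux_inv_pos B hB hBpos hBinv
  have hA'inv : IsUnit (Ring.inverse A) := isUnit_ringInverse.mpr hAinv
  have hCinv : IsUnit C :=
    CStarAlgebra.isUnit_of_le _ (le_add_of_nonneg_right hB'pos) ⟨hA'pos, hA'inv⟩
  set u : H := Ring.inverse C z with hu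
  have hCu : Ring.inverse A u + Ring.inverse B u = z := by
    have := congrArg (fun T : H →L[ℂ] H => T z) (Ring.mul_inverse_cancel C hCinv)
    simpa [ContinuousLinearMap.mul_apply, hC] using this
  -- the goal is about Re ⟪u, z⟫
  have key1 := aux_key A hA hApos hAinv x u
  have key2 := aux_key B hB hBpos hBinv y u
  have hz' : (inner ℂ u z : ℂ).re = (inner ℂ u x : ℂ).re + (inner ℂ u y : ℂ).re := by
    rw [hz, inner_add_right, Complex.add_re]
  have hzu : (inner ℂ (Ring.inverse A u) u : ℂ).re + (inner ℂ (Ring.inverse B u) u : ℂ).re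
      = (inner ℂ u z : ℂ).re := by
    rw [← Complex.add_re, ← inner_add_left, hCu, aux_re_symm]
  show (inner ℂ u z : ℂ).re ≤ _
  linarith
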